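/- Let Ψ: ℝⁿ → ℂ be measurable with Re Ψ ≥ 0 and sup_{ξ ∈ ℝⁿ} |Ψ(ξ)| / (1 + ‖ξ‖²) < ∞, and suppose there exist M > 0 and β ∈ (0,2] such that Re Ψ(ξ) ≥ ‖ξ‖^β whenever ‖ξ‖ > M. Let μ be a nonnegative Borel measure on ℝⁿ that is finite on bounded sets. Then the following three conditions are equivalent: (i) there exists γ ∈ (0,1) with ∫_{ℝⁿ} |Ψ(ξ)|^γ μ(dξ)/(1 + Re Ψ(ξ)) < ∞; (ii) there exists δ ∈ (0,1) with ∫_{ℝⁿ} ‖ξ‖^{2δ} μ(dξ)/(1 + Re Ψ(ξ)) < ∞; (iii) there exists η ∈ (0,1) with ∫_{ℝⁿ} μ(dξ)/(1 + Re Ψ(ξ))^{1−η} < ∞. In other words, the fractal indices satisfy: I_m > 0 ⟺ I_l > 0 ⟺ I_u > 0. -/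

import Mathlib

open MeasureTheory Complex Set

noncomputable section

/-- The upper fractal index `I_u` (with `sSup ∅ = 0` in `ℝ`). -/
def fractalIndexU (n : ℕ) (Ψ : EuclideanSpace ℝ (Fin n) → ℂ)
    (μ : Measure (EuclideanSpace ℝ (Fin n))) : ℝ :=
  sSup {η : ℝ | η ∈ Set.Ioo (0 : ℝ) 1 ∧
    Integrable (fun ξ => ((1 + (Ψ ξ).re) ^ (1 - η))⁻¹) μ}

/-- The middle fractal index `I_m` (with `sSup ∅ = 0` in `ℝ`). -/
def fractalIndexM (n : ℕ) (Ψ : EuclideanSpace ℝ (Fin n) → ℂ)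
    (μ : Measure (EuclideanSpace ℝ (Fin n))) : ℝ :=
  sSup {γ : ℝ | γ ∈ Set.Ioo (0 : ℝ) 1 ∧
    Integrable (fun ξ => ‖Ψ ξ‖ ^ γ / (1 + (Ψ ξ).re)) μ}

/-- The lower fractal index `I_l` (with `sSup ∅ = 0` in `ℝ`). -/
def fractalIndexL (n : ℕ) (Ψ : EuclideanSpace ℝ (Fin n) → ℂ)
    (μ : Measure (EuclideanSpace ℝ (Fin n))) : ℝ :=
  sSup {δ : ℝ | δ ∈ Set.Ioo (0 : ℝ) 1 ∧
    Integrable (fun ξ => ‖ξ‖ ^ (2 * δ) / (1 + (Ψ ξ).re)) μ}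

lemma key {n : ℕ} {μ : Measure (EuclideanSpace ℝ (Fin n))}
    (hμ : ∀ s : Set (EuclideanSpace ℝ (Fin n)), Bornology.IsBounded s → μ s < ⊤)
    {f g : EuclideanSpace ℝ (Fin n) → ℝ} (hf : AEStronglyMeasurable f μ)
    {R C₁ C₂ : ℝ}
    (hbd : ∀ x, ‖x‖ ≤ R → ‖f x‖ ≤ C₁)
    (hle : ∀ x, R < ‖x‖ → ‖f x‖ ≤ C₂ * g x)
    (hg : Integrable g μ) : Integrable f μ := by
  have hs : MeasurableSet (Metric.closedBall (0 : EuclideanSpace ℝ (Fin n)) R) :=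
    measurableSet_closedBall
  rw [← integrableOn_univ, ← Set.union_compl_self (Metric.closedBall 0 R), integrableOn_union]
  constructor
  · haveI : IsFiniteMeasure (μ.restrict (Metric.closedBall (0 : EuclideanSpace ℝ (Fin n)) R)) := by
      constructor
      rw [Measure.restrict_apply_univ]
      exact hμ _ Metric.isBounded_closedBall
    exact Integrable.mono' (integrable_const C₁) hf.restrict
      ((ae_restrict_iff' hs).2 (ae_of_all _ fun x hx =>
        hbd x (by simpa [mem_closedBall_zero_iff] using hx)))
  · exact Integrable.mono' ((hg.const_mul C₂).integrableOn) hf.restrict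
      ((ae_restrict_iff' hs.compl).2 (ae_of_all _ fun x hx =>
        hle x (by simpa [mem_closedBall_zero_iff, not_le] using hx)))

lemma pos_sSup_iff {S : Set ℝ} (hS : S ⊆ Set.Ioo 0 1) : 0 < sSup S ↔ S.Nonempty := by
  constructor
  · intro h
    by_contra hne
    rw [Set.not_nonempty_iff_eq_empty] at hne
    simp [hne, Real.sSup_empty] at h
  · rintro ⟨x, hx⟩
    have hb : BddAbove S := ⟨1, fun y hy => (hS hy).2.le⟩
    exact lt_of_lt_of_le (hS hx).1 (le_csSup hb hx)

theorem stmt18 (n : ℕ) (Ψ : EuclideanSpace ℝ (Fin n) → ℂ) (hΨmeas : Measurable Ψ)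
    (hΨre : ∀ ξ, 0 ≤ (Ψ ξ).re)
    (hΨgrowth : ∃ L : ℝ, ∀ ξ, ‖Ψ ξ‖ ≤ L * (1 + ‖ξ‖ ^ 2))
    (M β : ℝ) (hM : 0 < M) (hβ : β ∈ Set.Ioc (0 : ℝ) 2)
    (hgrowth : ∀ ξ : EuclideanSpace ℝ (Fin n), M < ‖ξ‖ → ‖ξ‖ ^ β ≤ (Ψ ξ).re)
    (μ : Measure (EuclideanSpace ℝ (Fin n)))
    (hμ : ∀ s : Set (EuclideanSpace ℝ (Fin n)), Bornology.IsBounded s → μ s < ⊤) :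
    ((∃ γ ∈ Set.Ioo (0 : ℝ) 1,
        Integrable (fun ξ => ‖Ψ ξ‖ ^ γ / (1 + (Ψ ξ).re)) μ) ↔
      (∃ δ ∈ Set.Ioo (0 : ℝ) 1,
        Integrable (fun ξ => ‖ξ‖ ^ (2 * δ) / (1 + (Ψ ξ).re)) μ)) ∧
    ((∃ δ ∈ Set.Ioo (0 : ℝ) 1,
        Integrable (fun ξ => ‖ξ‖ ^ (2 * δ) / (1 + (Ψ ξ).re)) μ) ↔
      (∃ η ∈ Set.Ioo (0 : ℝ) 1,
        Integrable (fun ξ => ((1 + (Ψ ξ).re) ^ (1 - η))⁻¹) μ)) ∧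
    (0 < fractalIndexM n Ψ μ ↔ 0 < fractalIndexL n Ψ μ) ∧
    (0 < fractalIndexL n Ψ μ ↔ 0 < fractalIndexU n Ψ μ) := by
  obtain ⟨hβ0, hβ2⟩ := hβ
  obtain ⟨L, hL⟩ := hΨgrowth
  set L₀ : ℝ := max L 0 with hL₀def
  have hL₀0 : (0:ℝ) ≤ L₀ := le_max_right _ _
  have hL₀ : ∀ ξ, ‖Ψ ξ‖ ≤ L₀ * (1 + ‖ξ‖^2) := fun ξ =>
    (hL ξ).trans (mul_le_mul_of_nonneg_right (le_max_left _ _) (by positivity))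
  set R : ℝ := max M 1 with hRdef
  have hR1 : (1:ℝ) ≤ R := le_max_right _ _
  have hR0 : (0:ℝ) < R := lt_of_lt_of_le one_pos hR1
  have hden : ∀ ξ, 0 < 1 + (Ψ ξ).re := fun ξ => by linarith [hΨre ξ]
  -- measurability
  have hre : Measurable fun ξ => (Ψ ξ).re := Complex.measurable_re.comp hΨmeas
  have habs : Measurable fun ξ => ‖Ψ ξ‖ := by
    simpa using hΨmeas.norm
  have hd : Measurable fun ξ : EuclideanSpace ℝ (Fin n) => 1 + (Ψ ξ).re :=
    measurable_const.add hre
  have mM : ∀ γ : ℝ, AEStronglyMeasurable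
      (fun ξ => ‖Ψ ξ‖ ^ γ / (1 + (Ψ ξ).re)) μ := fun γ =>
    Measurable.aestronglyMeasurable (by fun_prop)
  have mL : ∀ δ : ℝ, AEStronglyMeasurable
      (fun ξ : EuclideanSpace ℝ (Fin n) => ‖ξ‖ ^ (2 * δ) / (1 + (Ψ ξ).re)) μ := fun δ =>
    Measurable.aestronglyMeasurable (by fun_prop)
  have mU : ∀ η : ℝ, AEStronglyMeasurable
      (fun ξ => ((1 + (Ψ ξ).re) ^ (1 - η))⁻¹) μ := fun η =>
    Measurable.aestronglyMeasurable (by fun_prop)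
  -- npow-to-rpow helper
  have hnsq : ∀ (a t : ℝ), 0 ≤ a → (a^2) ^ t = a ^ (2*t) := by
    intro a t ha
    rw [← Real.rpow_natCast a 2, ← Real.rpow_mul ha]
    norm_num
  -- big-ξ facts
  have hxfacts : ∀ x : EuclideanSpace ℝ (Fin n), R < ‖x‖ →
      M < ‖x‖ ∧ 1 ≤ ‖x‖^2 := fun x hx =>
    ⟨lt_of_le_of_lt (le_max_left M 1) hx,
     one_le_pow₀ (le_of_lt (lt_of_le_of_lt hR1 hx))⟩
  -- (i) → (ii)
  have Imtl : (∃ γ ∈ Set.Ioo (0 : ℝ) 1,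
        Integrable (fun ξ => ‖Ψ ξ‖ ^ γ / (1 + (Ψ ξ).re)) μ) →
      (∃ δ ∈ Set.Ioo (0 : ℝ) 1,
        Integrable (fun ξ => ‖ξ‖ ^ (2 * δ) / (1 + (Ψ ξ).re)) μ) := by
    rintro ⟨γ, ⟨hγ0, hγ1⟩, hint⟩
    refine ⟨γ*β/2, ⟨by positivity, by nlinarith⟩, ?_⟩
    refine key hμ (mL _) (R := R) (C₁ := R ^ (2*(γ*β/2))) (C₂ := 1) ?_ ?_ hint
    · intro x hx
      have h1 : (0:ℝ) ≤ ‖x‖ ^ (2*(γ*β/2)) / (1 + (Ψ x).re) :=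
        div_nonneg (Real.rpow_nonneg (norm_nonneg x) _) (hden x).le
      rw [Real.norm_of_nonneg h1]
      calc ‖x‖ ^ (2*(γ*β/2)) / (1 + (Ψ x).re) ≤ ‖x‖ ^ (2*(γ*β/2)) / 1 := by
            gcongr
            linarith [hΨre x]
        _ = ‖x‖ ^ (2*(γ*β/2)) := div_one _
        _ ≤ R ^ (2*(γ*β/2)) := Real.rpow_le_rpow (norm_nonneg x) hx (by positivity)
    · intro x hx
      obtain ⟨hxM, hx1⟩ := hxfacts x hx
      have h1 : (0:ℝ) ≤ ‖x‖ ^ (2*(γ*β/2)) / (1 + (Ψ x).re) :=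
        div_nonneg (Real.rpow_nonneg (norm_nonneg x) _) (hden x).le
      rw [Real.norm_of_nonneg h1, one_mul]
      have key1 : ‖x‖ ^ (2*(γ*β/2)) ≤ ‖Ψ x‖ ^ γ := by
        have e : 2*(γ*β/2) = β*γ := by ring
        rw [e, Real.rpow_mul (norm_nonneg x)]
        calc (‖x‖^β)^γ ≤ ((Ψ x).re)^γ :=
              Real.rpow_le_rpow (Real.rpow_nonneg (norm_nonneg x) β) (hgrowth x hxM) hγ0.le
          _ ≤ (‖Ψ x‖)^γ :=
              Real.rpow_le_rpow (hΨre x) (Complex.re_le_norm _) hγ0.le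
      gcongr
      linarith [hΨre x]
  -- (ii) → (i)
  have Iltm : (∃ δ ∈ Set.Ioo (0 : ℝ) 1,
        Integrable (fun ξ => ‖ξ‖ ^ (2 * δ) / (1 + (Ψ ξ).re)) μ) →
      (∃ γ ∈ Set.Ioo (0 : ℝ) 1,
        Integrable (fun ξ => ‖Ψ ξ‖ ^ γ / (1 + (Ψ ξ).re)) μ) := by
    rintro ⟨δ, ⟨hδ0, hδ1⟩, hint⟩
    refine ⟨δ, ⟨hδ0, hδ1⟩, ?_⟩
    refine key hμ (mM _) (R := R) (C₁ := (L₀*(1+R^2)) ^ δ) (C₂ := (2*L₀) ^ δ) ?_ ?_ hint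
    · intro x hx
      have h1 : (0:ℝ) ≤ ‖Ψ x‖ ^ δ / (1 + (Ψ x).re) :=
        div_nonneg (Real.rpow_nonneg (norm_nonneg _) _) (hden x).le
      rw [Real.norm_of_nonneg h1]
      have hbd : ‖Ψ x‖ ≤ L₀ * (1 + R^2) := by
        have h2 := hL₀ x
        have h3 : ‖x‖^2 ≤ R^2 := by nlinarith [norm_nonneg x]
        nlinarith
      calc ‖Ψ x‖ ^ δ / (1 + (Ψ x).re) ≤ ‖Ψ x‖ ^ δ / 1 := by
            gcongr
            linarith [hΨre x]
        _ = ‖Ψ x‖ ^ δ := div_one _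
        _ ≤ (L₀*(1+R^2)) ^ δ := Real.rpow_le_rpow (norm_nonneg _) hbd hδ0.le
    · intro x hx
      obtain ⟨hxM, hx1⟩ := hxfacts x hx
      have h1 : (0:ℝ) ≤ ‖Ψ x‖ ^ δ / (1 + (Ψ x).re) :=
        div_nonneg (Real.rpow_nonneg (norm_nonneg _) _) (hden x).le
      rw [Real.norm_of_nonneg h1]
      have key1 : ‖Ψ x‖ ^ δ ≤ (2*L₀) ^ δ * ‖x‖ ^ (2*δ) := by
        have h2 : ‖Ψ x‖ ≤ (2*L₀) * ‖x‖^2 := by nlinarith [hL₀ x]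
        calc ‖Ψ x‖ ^ δ ≤ ((2*L₀) * ‖x‖^2) ^ δ :=
              Real.rpow_le_rpow (norm_nonneg _) h2 hδ0.le
          _ = (2*L₀)^δ * (‖x‖^2)^δ := Real.mul_rpow (by positivity) (by positivity)
          _ = (2*L₀)^δ * ‖x‖^(2*δ) := by rw [hnsq _ _ (norm_nonneg x)]
      calc ‖Ψ x‖ ^ δ / (1 + (Ψ x).re)
            ≤ ((2*L₀)^δ * ‖x‖^(2*δ)) / (1 + (Ψ x).re) := by gcongr <;> linarith [hΨre x]
        _ = (2*L₀)^δ * (‖x‖^(2*δ) / (1 + (Ψ x).re)) := by ring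
  -- (ii) → (iii)
  have Iltu : (∃ δ ∈ Set.Ioo (0 : ℝ) 1,
        Integrable (fun ξ => ‖ξ‖ ^ (2 * δ) / (1 + (Ψ ξ).re)) μ) →
      (∃ η ∈ Set.Ioo (0 : ℝ) 1,
        Integrable (fun ξ => ((1 + (Ψ ξ).re) ^ (1 - η))⁻¹) μ) := by
    rintro ⟨δ, ⟨hδ0, hδ1⟩, hint⟩
    refine ⟨δ, ⟨hδ0, hδ1⟩, ?_⟩
    refine key hμ (mU _) (R := R) (C₁ := 1) (C₂ := (1+2*L₀) ^ δ) ?_ ?_ hint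
    · intro x _
      have h0 : (0:ℝ) ≤ ((1 + (Ψ x).re) ^ (1-δ))⁻¹ :=
        inv_nonneg.2 (Real.rpow_nonneg (hden x).le _)
      rw [Real.norm_of_nonneg h0]
      have h1 : (1:ℝ) ≤ (1 + (Ψ x).re) ^ (1-δ) := by
        calc (1:ℝ) = 1 ^ (1-δ) := (Real.one_rpow _).symm
          _ ≤ (1 + (Ψ x).re) ^ (1-δ) :=
            Real.rpow_le_rpow zero_le_one (by linarith [hΨre x]) (by linarith)
      exact inv_le_one_of_one_le₀ h1
    · intro x hx
      obtain ⟨hxM, hx1⟩ := hxfacts x hx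
      have h0 : (0:ℝ) ≤ ((1 + (Ψ x).re) ^ (1-δ))⁻¹ :=
        inv_nonneg.2 (Real.rpow_nonneg (hden x).le _)
      rw [Real.norm_of_nonneg h0]
      have e1 : ((1 + (Ψ x).re) ^ (1-δ))⁻¹ = (1 + (Ψ x).re) ^ (δ-1) := by
        rw [← Real.rpow_neg (hden x).le, neg_sub]
      have e2 : (1 + (Ψ x).re) ^ (δ-1) = (1 + (Ψ x).re) ^ δ / (1 + (Ψ x).re) := by
        rw [Real.rpow_sub (hden x), Real.rpow_one]
      have hnum : (1 + (Ψ x).re) ^ δ ≤ (1+2*L₀)^δ * ‖x‖^(2*δ) := by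
        have h3 : 1 + (Ψ x).re ≤ (1+2*L₀) * ‖x‖^2 := by
          have h4 := hL₀ x
          have h5 : (Ψ x).re ≤ ‖Ψ x‖ := Complex.re_le_norm _
          nlinarith
        calc (1 + (Ψ x).re) ^ δ ≤ ((1+2*L₀) * ‖x‖^2) ^ δ :=
              Real.rpow_le_rpow (hden x).le h3 hδ0.le
          _ = (1+2*L₀)^δ * (‖x‖^2)^δ := Real.mul_rpow (by positivity) (by positivity)
          _ = (1+2*L₀)^δ * ‖x‖^(2*δ) := by rw [hnsq _ _ (norm_nonneg x)]
      calc ((1 + (Ψ x).re) ^ (1-δ))⁻¹ = (1 + (Ψ x).re) ^ δ / (1 + (Ψ x).re) := by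
            rw [e1, e2]
        _ ≤ ((1+2*L₀)^δ * ‖x‖^(2*δ)) / (1 + (Ψ x).re) := by gcongr <;> linarith [hΨre x]
        _ = (1+2*L₀)^δ * (‖x‖^(2*δ) / (1 + (Ψ x).re)) := by ring
  -- (iii) → (ii)
  have Iutl : (∃ η ∈ Set.Ioo (0 : ℝ) 1,
        Integrable (fun ξ => ((1 + (Ψ ξ).re) ^ (1 - η))⁻¹) μ) →
      (∃ δ ∈ Set.Ioo (0 : ℝ) 1,
        Integrable (fun ξ => ‖ξ‖ ^ (2 * δ) / (1 + (Ψ ξ).re)) μ) := by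
    rintro ⟨η, ⟨hη0, hη1⟩, hint⟩
    refine ⟨η*β/2, ⟨by positivity, by nlinarith⟩, ?_⟩
    refine key hμ (mL _) (R := R) (C₁ := R ^ (2*(η*β/2))) (C₂ := 1) ?_ ?_ hint
    · intro x hx
      have h1 : (0:ℝ) ≤ ‖x‖ ^ (2*(η*β/2)) / (1 + (Ψ x).re) :=
        div_nonneg (Real.rpow_nonneg (norm_nonneg x) _) (hden x).le
      rw [Real.norm_of_nonneg h1]
      calc ‖x‖ ^ (2*(η*β/2)) / (1 + (Ψ x).re) ≤ ‖x‖ ^ (2*(η*β/2)) / 1 := by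
            gcongr
            linarith [hΨre x]
        _ = ‖x‖ ^ (2*(η*β/2)) := div_one _
        _ ≤ R ^ (2*(η*β/2)) := Real.rpow_le_rpow (norm_nonneg x) hx (by positivity)
    · intro x hx
      obtain ⟨hxM, hx1⟩ := hxfacts x hx
      have h1 : (0:ℝ) ≤ ‖x‖ ^ (2*(η*β/2)) / (1 + (Ψ x).re) :=
        div_nonneg (Real.rpow_nonneg (norm_nonneg x) _) (hden x).le
      rw [Real.norm_of_nonneg h1, one_mul]
      have key1 : ‖x‖ ^ (2*(η*β/2)) ≤ (1 + (Ψ x).re) ^ η := by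
        have e : 2*(η*β/2) = β*η := by ring
        rw [e, Real.rpow_mul (norm_nonneg x)]
        calc (‖x‖^β)^η ≤ ((Ψ x).re)^η :=
              Real.rpow_le_rpow (Real.rpow_nonneg (norm_nonneg x) β) (hgrowth x hxM) hη0.le
          _ ≤ (1 + (Ψ x).re)^η :=
              Real.rpow_le_rpow (hΨre x) (by linarith) hη0.le
      have e1 : ((1 + (Ψ x).re) ^ (1-η))⁻¹ = (1 + (Ψ x).re) ^ η / (1 + (Ψ x).re) := by
        rw [← Real.rpow_neg (hden x).le, neg_sub, Real.rpow_sub (hden x), Real.rpow_one]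
      rw [e1]
      gcongr
      linarith [hΨre x]
  refine ⟨⟨Imtl, Iltm⟩, ⟨Iltu, Iutl⟩, ?_, ?_⟩
  · rw [fractalIndexM, fractalIndexL, pos_sSup_iff (fun x hx => hx.1),
      pos_sSup_iff (fun x hx => hx.1)]
    constructor
    · rintro ⟨x, hx⟩
      obtain ⟨d, hd1, hd2⟩ := Imtl ⟨x, hx.1, hx.2⟩
      exact ⟨d, hd1, hd2⟩
    · rintro ⟨x, hx⟩
      obtain ⟨d, hd1, hd2⟩ := Iltm ⟨x, hx.1, hx.2⟩
      exact ⟨d, hd1, hd2⟩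
  · rw [fractalIndexL, fractalIndexU, pos_sSup_iff (fun x hx => hx.1),
      pos_sSup_iff (fun x hx => hx.1)]
    constructor
    · rintro ⟨x, hx⟩
      obtain ⟨d, hd1, hd2⟩ := Iltu ⟨x, hx.1, hx.2⟩
      exact ⟨d, hd1, hd2⟩
    · rintro ⟨x, hx⟩
      obtain ⟨d, hd1, hd2⟩ := Iutl ⟨x, hx.1, hx.2⟩
      exact ⟨d, hd1, hd2⟩
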